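/- Suppose M > 0, L ≥ max(0.62, 0.15*M), r ≥ 1 with r ≥ sup_{y∈[0,1]} |Q*s(y)|, 0 < t < 1/(B+C), and 0 < ε ≤ B/(2*(L*r + L + r)). Set δ₁ = L*ε/(1 - (L+r)*ε), δ₂ = L*r*ε/(1 - (L+r)*ε), and ρ = (1 - t*B) + t*((1 - t*B)*δ₁ + δ₂). Then δ₁ ≤ δ₂ < B/2 and ρ < 1, and for any r-admissible graphs Φ, Γ in G_L with graph-transform images Ψ_Φ and Ψ_Γ respectively, sup_{η∈ℝ} ‖Ψ_Φ(η) - Ψ_Γ(η)‖_∞ ≤ ρ * sup_{η∈ℝ} ‖Φ(η) - Γ(η)‖_∞; that is, the Budyko graph transform is a contraction on the set of r-admissible graphs in G_L. -/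

import Mathlib

noncomputable section

open scoped BoundedContinuousFunction

namespace Budyko

/-- Solar constant (W/m²). -/
def Q : ℝ := 343
/-- OLR constant A (W/m²). -/
def A : ℝ := 202
/-- OLR constant B (W/m²/°C). -/
def B : ℝ := 1.9
/-- Transport constant C (W/m²/°C). -/
def C : ℝ := 3.04
/-- Critical temperature (°C). -/
def Tc : ℝ := -10

/-- Insolation distribution. -/
def s (y : ℝ) : ℝ := 1 - 0.241 * (3 * y ^ 2 - 1)

/-- Clamp to `[0,1]`. -/
def clamp (y : ℝ) : ℝ := min (max y 0) 1

/-- Insolation extended to the real line. -/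
def sTilde (y : ℝ) : ℝ := s (clamp y)

/-- Iceline-dependent smooth albedo with steepness `M`. -/
def albedo (M η y : ℝ) : ℝ := 0.47 + 0.15 * Real.tanh (M * (clamp y - η))

/-- The Budyko vector field `F(T,η)(y)`. -/
def F (M : ℝ) (T : ℝ →ᵇ ℝ) (η y : ℝ) : ℝ :=
  Q * sTilde y * (1 - albedo M η y) - (B + C) * T y - A + C * ∫ u in (0:ℝ)..1, T u

/-- `g(η) = ∫₀¹ Q s(y) (1 - a(η)(y)) dy`. -/
def g (M η : ℝ) : ℝ := ∫ y in (0:ℝ)..1, Q * s y * (1 - albedo M η y)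

/-- The local equilibrium temperature profile `T*(η)(y)`. -/
def Tstar (M η y : ℝ) : ℝ :=
  (Q * sTilde y * (1 - albedo M η y) - A + (C / B) * (g M η - A)) / (B + C)

/-- Membership in the class `G_L` of Lipschitz graphs. -/
def MemGL (L : ℝ) (Φ : ℝ → ℝ →ᵇ ℝ) : Prop :=
  ∀ ζ η : ℝ, ‖Φ ζ - Φ η‖ ≤ L * |ζ - η|

/-- A graph is `r`-admissible if `‖Φ‖_G ≤ r` and every `Φ(η)` is `r`-Lipschitz. -/
def Admissible (r : ℝ) (Φ : ℝ → ℝ →ᵇ ℝ) : Prop :=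
  (∀ η : ℝ, ‖Φ η‖ ≤ r) ∧ ∀ η x z : ℝ, |Φ η x - Φ η z| ≤ r * |x - z|

/-- `Ψ` is a graph-transform image of `Φ` (time step `t`, slow parameter `ε`). -/
def IsGTImage (M t ε : ℝ) (Φ Ψ : ℝ → ℝ →ᵇ ℝ) : Prop :=
  ∀ η ξ : ℝ, η = ξ + ε * t * (Φ ξ ξ - Tc) → ∀ y : ℝ, Ψ η y = Φ ξ y + t * F M (Φ ξ) ξ y

/-- `Φ` is a fixed point of the Budyko graph transform. -/
def IsGTFixed (M t ε : ℝ) (Φ : ℝ → ℝ →ᵇ ℝ) : Prop := IsGTImage M t ε Φ Φ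

/- ### Auxiliary lemmas -/

lemma tanh_hasDerivAt (x : ℝ) : HasDerivAt Real.tanh (1 / Real.cosh x ^ 2) x := by
  have h := (Real.hasDerivAt_sinh x).div (Real.hasDerivAt_cosh x) (Real.cosh_pos x).ne'
  have hfun : Real.tanh = fun y => Real.sinh y / Real.cosh y :=
    funext fun y => Real.tanh_eq_sinh_div_cosh y
  rw [hfun]
  convert h using 1
  rfl
  rfl
  rfl
  have h1 := Real.cosh_sq_sub_sinh_sq x
  rw [div_eq_div_iff (by positivity) (by positivity)]
  nlinarith [Real.cosh_pos x]

lemma tanh_lipschitz (a b : ℝ) : |Real.tanh a - Real.tanh b| ≤ |a - b| := by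
  have hlip : LipschitzWith 1 Real.tanh := by
    apply lipschitzWith_of_nnnorm_deriv_le (fun x => (tanh_hasDerivAt x).differentiableAt)
    intro x
    rw [(tanh_hasDerivAt x).deriv, ← NNReal.coe_le_coe, coe_nnnorm, NNReal.coe_one,
      Real.norm_eq_abs]
    rw [abs_of_pos (by positivity), div_le_one (by positivity)]
    nlinarith [Real.one_le_cosh x]
  have := hlip.dist_le_mul a b
  simpa [Real.dist_eq] using this

lemma clamp_mem (y : ℝ) : clamp y ∈ Set.Icc (0:ℝ) 1 :=
  ⟨le_min (le_max_right y 0) zero_le_one, min_le_right _ _⟩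

lemma bcf_abs_le (f g : ℝ →ᵇ ℝ) (y : ℝ) : |f y - g y| ≤ ‖f - g‖ := by
  have := (f - g).norm_coe_le_norm y
  simpa [Real.norm_eq_abs] using this

set_option maxHeartbeats 1000000 in
/-- The Budyko graph transform is a contraction with factor ρ < 1 on the set of
r-admissible graphs in G_L. -/
theorem graph_transform_contraction (M L r t ε δ₁ δ₂ ρ : ℝ)
    (hM : 0 < M) (hL : max 0.62 (0.15 * M) ≤ L) (hr1 : 1 ≤ r)
    (hrs : ∀ y ∈ Set.Icc (0:ℝ) 1, |Q * s y| ≤ r)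
    (ht0 : 0 < t) (ht1 : t < 1 / (B + C))
    (hε0 : 0 < ε) (hε1 : ε ≤ B / (2 * (L * r + L + r)))
    (hδ₁ : δ₁ = L * ε / (1 - (L + r) * ε))
    (hδ₂ : δ₂ = L * r * ε / (1 - (L + r) * ε))
    (hρ : ρ = (1 - t * B) + t * ((1 - t * B) * δ₁ + δ₂)) :
    (δ₁ ≤ δ₂ ∧ δ₂ < B / 2) ∧ ρ < 1 ∧
      ∀ Φ Γ ΨΦ ΨΓ : ℝ → ℝ →ᵇ ℝ,
        Admissible r Φ → MemGL L Φ → Admissible r Γ → MemGL L Γ →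
        IsGTImage M t ε Φ ΨΦ → IsGTImage M t ε Γ ΨΓ →
        (⨆ η : ℝ, ‖ΨΦ η - ΨΓ η‖) ≤ ρ * ⨆ η : ℝ, ‖Φ η - Γ η‖ := by
  have hBv : B = 1.9 := rfl
  have hCv : C = 3.04 := rfl
  have hL1 : (0.62:ℝ) ≤ L := le_trans (le_max_left _ _) hL
  have hLM : 0.15 * M ≤ L := le_trans (le_max_right _ _) hL
  have hLpos : (0:ℝ) < L := lt_of_lt_of_le (by norm_num) hL1
  have hr0 : (0:ℝ) < r := lt_of_lt_of_le one_pos hr1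
  have hS : (0:ℝ) < L * r + L + r := by positivity
  have hεS : (L * r + L + r) * ε ≤ B / 2 := by
    have h1 : (L * r + L + r) * ε ≤ (L * r + L + r) * (B / (2 * (L * r + L + r))) :=
      mul_le_mul_of_nonneg_left hε1 hS.le
    have h2 : (L * r + L + r) * (B / (2 * (L * r + L + r))) = B / 2 := by
      field_simp
    linarith
  have hLrε : (L + r) * ε ≤ 0.95 := by
    have hLrε0 : 0 ≤ L * r * ε := by positivity
    rw [hBv] at hεS; linarith
  have hden : (0:ℝ) < 1 - (L + r) * ε := by linarith
  have hδ₁0 : 0 ≤ δ₁ := by rw [hδ₁]; positivity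
  have hδ₂0 : 0 ≤ δ₂ := by rw [hδ₂]; positivity
  have hd12 : δ₁ ≤ δ₂ := by
    rw [hδ₁, hδ₂, div_le_div_iff₀ hden hden]
    linarith [mul_nonneg (mul_nonneg (mul_nonneg hLpos.le hε0.le)
      (by linarith : (0:ℝ) ≤ r - 1)) hden.le]
  have hd2B : δ₂ < B / 2 := by
    rw [hδ₂, div_lt_iff₀ hden, hBv]
    have h3 : 0 < (L + r) * ε := by positivity
    rw [hBv] at hεS
    linarith
  have hBC : B + C = 4.94 := by rw [hBv, hCv]; norm_num
  have ht1' : t < 1 / 4.94 := by rwa [hBC] at ht1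
  have htle1 : t ≤ 1 := by linarith
  have h1tB : 0 ≤ 1 - t * B := by rw [hBv]; linarith
  have h1tBC : 0 ≤ 1 - t * (B + C) := by rw [hBC]; linarith
  have hd2B' : δ₂ < 0.95 := by rw [hBv] at hd2B; linarith
  have hρlt : ρ < 1 := by
    have hkey : (1 - t * B) * δ₁ + δ₂ < B := by
      rw [hBv]
      linarith [mul_nonneg (mul_nonneg ht0.le (by norm_num : (0:ℝ) ≤ 1.9)) hδ₁0]
    have hkey2 := mul_lt_mul_of_pos_left hkey ht0
    rw [hρ]; linarith
  have hρ0 : 0 ≤ ρ := by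
    have h2 : 0 ≤ t * ((1 - t * B) * δ₁ + δ₂) :=
      mul_nonneg ht0.le (add_nonneg (mul_nonneg h1tB hδ₁0) hδ₂0)
    rw [hρ]; linarith
  refine ⟨⟨hd12, hd2B⟩, hρlt, ?_⟩
  intro Φ Γ ΨΦ ΨΓ hΦ hΦL hΓ hΓL hΨΦ hΨΓ
  set D := ⨆ η : ℝ, ‖Φ η - Γ η‖ with hDdef
  have hbdd : BddAbove (Set.range fun η => ‖Φ η - Γ η‖) := by
    refine ⟨r + r, ?_⟩
    rintro x ⟨η, rfl⟩
    exact (norm_sub_le _ _).trans (add_le_add (hΦ.1 η) (hΓ.1 η))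
  have hDle : ∀ ξ : ℝ, ‖Φ ξ - Γ ξ‖ ≤ D := fun ξ => le_ciSup hbdd ξ
  have hD0 : 0 ≤ D := le_trans (norm_nonneg _) (hDle 0)
  apply ciSup_le
  intro η
  -- existence of a preimage under the iceline shift map, by IVT
  have hsurj : ∀ (Θ : ℝ → ℝ →ᵇ ℝ), Admissible r Θ → MemGL L Θ →
      ∃ ξ : ℝ, η = ξ + ε * t * (Θ ξ ξ - Tc) := by
    intro Θ hΘ hΘL
    have hdiag : ∀ a b : ℝ, |Θ a a - Θ b b| ≤ (L + r) * |a - b| := by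
      intro a b
      have e1 : |Θ a a - Θ b a| ≤ L * |a - b| := (bcf_abs_le (Θ a) (Θ b) a).trans (hΘL a b)
      have e2 : |Θ b a - Θ b b| ≤ r * |a - b| := hΘ.2 b a b
      calc |Θ a a - Θ b b| ≤ |Θ a a - Θ b a| + |Θ b a - Θ b b| := abs_sub_le _ _ _
        _ ≤ (L + r) * |a - b| := by linarith
    have hcont : Continuous fun ξ : ℝ => Θ ξ ξ := by
      refine (LipschitzWith.of_dist_le_mul (K := ⟨L + r, by positivity⟩) ?_).continuous
      intro a b
      have := hdiag a b
      simp only [Real.dist_eq]; exact this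
    set φ : ℝ → ℝ := fun ξ => ξ + ε * t * (Θ ξ ξ - Tc) with hφdef
    have hφcont : Continuous φ :=
      continuous_id.add (continuous_const.mul (hcont.sub continuous_const))
    set c : ℝ := ε * t * (r + 10) with hc
    have hc0 : 0 ≤ c := by positivity
    have hub : ∀ ξ : ℝ, |Θ ξ ξ - Tc| ≤ r + 10 := by
      intro ξ
      have h1 : |Θ ξ ξ| ≤ r := by
        have := (Θ ξ).norm_coe_le_norm ξ
        rw [Real.norm_eq_abs] at this
        exact this.trans (hΘ.1 ξ)
      rw [abs_le] at h1 ⊢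
      rw [show Tc = (-10 : ℝ) from rfl]
      constructor <;> linarith [h1.1, h1.2]
    have h1 : φ (η - c) ≤ η := by
      have h := hub (η - c)
      rw [abs_le] at h
      have h2 : ε * t * (Θ (η - c) (η - c) - Tc) ≤ ε * t * (r + 10) :=
        mul_le_mul_of_nonneg_left h.2 (by positivity)
      simp only [hφdef]
      linarith
    have h2 : η ≤ φ (η + c) := by
      have h := hub (η + c)
      rw [abs_le] at h
      have h2 : -(ε * t * (r + 10)) ≤ ε * t * (Θ (η + c) (η + c) - Tc) := by
        have := mul_le_mul_of_nonneg_left h.1 (show (0:ℝ) ≤ ε * t by positivity)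
        linarith [this]
      simp only [hφdef]
      linarith
    obtain ⟨ξ, _, hξ⟩ := intermediate_value_Icc
      (by linarith : η - c ≤ η + c) hφcont.continuousOn ⟨h1, h2⟩
    exact ⟨ξ, hξ.symm⟩
  obtain ⟨ξ₁, hξ₁⟩ := hsurj Φ hΦ hΦL
  obtain ⟨ξ₂, hξ₂⟩ := hsurj Γ hΓ hΓL
  have hΨ1 := hΨΦ η ξ₁ hξ₁
  have hΨ2 := hΨΓ η ξ₂ hξ₂
  set d : ℝ := |ξ₁ - ξ₂| with hd
  have hd0 : 0 ≤ d := abs_nonneg _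
  -- estimate on |ξ₁ - ξ₂|
  have hΔ : |Γ ξ₂ ξ₂ - Φ ξ₁ ξ₁| ≤ D + (L + r) * d := by
    have e1 : |Γ ξ₂ ξ₂ - Φ ξ₂ ξ₂| ≤ D := by
      have := bcf_abs_le (Γ ξ₂) (Φ ξ₂) ξ₂
      have h2 : ‖Γ ξ₂ - Φ ξ₂‖ = ‖Φ ξ₂ - Γ ξ₂‖ := norm_sub_rev _ _
      linarith [this, h2 ▸ hDle ξ₂, hDle ξ₂]
    have e2 : |Φ ξ₂ ξ₂ - Φ ξ₂ ξ₁| ≤ r * d := by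
      have := hΦ.2 ξ₂ ξ₂ ξ₁
      rwa [abs_sub_comm ξ₂ ξ₁] at this
    have e3 : |Φ ξ₂ ξ₁ - Φ ξ₁ ξ₁| ≤ L * d := by
      have := (bcf_abs_le (Φ ξ₂) (Φ ξ₁) ξ₁).trans (hΦL ξ₂ ξ₁)
      rwa [abs_sub_comm ξ₂ ξ₁] at this
    calc |Γ ξ₂ ξ₂ - Φ ξ₁ ξ₁|
        ≤ |Γ ξ₂ ξ₂ - Φ ξ₂ ξ₂| + |Φ ξ₂ ξ₂ - Φ ξ₁ ξ₁| := abs_sub_le _ _ _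
      _ ≤ |Γ ξ₂ ξ₂ - Φ ξ₂ ξ₂| + (|Φ ξ₂ ξ₂ - Φ ξ₂ ξ₁| + |Φ ξ₂ ξ₁ - Φ ξ₁ ξ₁|) := by
          linarith [abs_sub_le (Φ ξ₂ ξ₂) (Φ ξ₂ ξ₁) (Φ ξ₁ ξ₁)]
      _ ≤ D + (L + r) * d := by linarith
  have heq : ξ₁ - ξ₂ = ε * t * (Γ ξ₂ ξ₂ - Φ ξ₁ ξ₁) := by linear_combination hξ₂ - hξ₁
  have hdle : d ≤ ε * t * (D + (L + r) * d) := by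
    calc d = |ε * t * (Γ ξ₂ ξ₂ - Φ ξ₁ ξ₁)| := by rw [hd, heq]
      _ = ε * t * |Γ ξ₂ ξ₂ - Φ ξ₁ ξ₁| := by
          rw [abs_mul, abs_of_nonneg (by positivity : (0:ℝ) ≤ ε * t)]
      _ ≤ ε * t * (D + (L + r) * d) := mul_le_mul_of_nonneg_left hΔ (by positivity)
  have hkey : d * (1 - (L + r) * ε) ≤ ε * t * D := by
    have hh : 0 ≤ ((L + r) * d) * ε * (1 - t) :=
      mul_nonneg (mul_nonneg (by positivity) hε0.le) (by linarith)
    nlinarith [hh]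
  have hLd : L * d ≤ t * δ₁ * D := by
    have h2 : t * δ₁ * D = L * (ε * t * D) / (1 - (L + r) * ε) := by
      rw [hδ₁]; field_simp
    rw [h2, le_div_iff₀ hden]
    linarith [mul_le_mul_of_nonneg_left hkey hLpos.le]
  have hLrd : L * r * d ≤ t * δ₂ * D := by
    have h2 : t * δ₂ * D = L * r * (ε * t * D) / (1 - (L + r) * ε) := by
      rw [hδ₂]; field_simp
    rw [h2, le_div_iff₀ hden]
    linarith [mul_le_mul_of_nonneg_left hkey (by positivity : (0:ℝ) ≤ L * r)]
  -- pointwise estimates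
  set K : ℝ := D + L * d with hK
  have hKd : ∀ y : ℝ, |Φ ξ₁ y - Γ ξ₂ y| ≤ K := by
    intro y
    have e1 : |Φ ξ₁ y - Φ ξ₂ y| ≤ L * d := (bcf_abs_le (Φ ξ₁) (Φ ξ₂) y).trans (hΦL ξ₁ ξ₂)
    have e2 : |Φ ξ₂ y - Γ ξ₂ y| ≤ D := (bcf_abs_le (Φ ξ₂) (Γ ξ₂) y).trans (hDle ξ₂)
    calc |Φ ξ₁ y - Γ ξ₂ y| ≤ |Φ ξ₁ y - Φ ξ₂ y| + |Φ ξ₂ y - Γ ξ₂ y| := abs_sub_le _ _ _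
      _ ≤ K := by rw [hK]; linarith
  have hI : |(∫ u in (0:ℝ)..1, Φ ξ₁ u) - ∫ u in (0:ℝ)..1, Γ ξ₂ u| ≤ K := by
    have hi1 : IntervalIntegrable (Φ ξ₁) MeasureTheory.volume 0 1 :=
      (Φ ξ₁).continuous.intervalIntegrable _ _
    have hi2 : IntervalIntegrable (Γ ξ₂) MeasureTheory.volume 0 1 :=
      (Γ ξ₂).continuous.intervalIntegrable _ _
    rw [← intervalIntegral.integral_sub hi1 hi2]
    have := intervalIntegral.norm_integral_le_of_norm_le_const (a := (0:ℝ)) (b := 1)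
      (C := K) (f := fun u => Φ ξ₁ u - Γ ξ₂ u)
      (fun u _ => by simpa [Real.norm_eq_abs] using hKd u)
    simpa [Real.norm_eq_abs] using this
  have ha : ∀ y : ℝ, |albedo M ξ₂ y - albedo M ξ₁ y| ≤ L * d := by
    intro y
    have h1 : albedo M ξ₂ y - albedo M ξ₁ y =
        0.15 * (Real.tanh (M * (clamp y - ξ₂)) - Real.tanh (M * (clamp y - ξ₁))) := by
      simp only [albedo]; ring
    have h2 := tanh_lipschitz (M * (clamp y - ξ₂)) (M * (clamp y - ξ₁))
    have h3 : |M * (clamp y - ξ₂) - M * (clamp y - ξ₁)| = M * d := by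
      rw [show M * (clamp y - ξ₂) - M * (clamp y - ξ₁) = M * (ξ₁ - ξ₂) by ring,
        abs_mul, abs_of_pos hM, hd]
    rw [h1, abs_mul, abs_of_nonneg (by norm_num : (0:ℝ) ≤ 0.15)]
    rw [h3] at h2
    nlinarith
  have hQs : ∀ y : ℝ, |Q * sTilde y| ≤ r := fun y => hrs _ (clamp_mem y)
  have hpt : ∀ y : ℝ, |ΨΦ η y - ΨΓ η y| ≤ ρ * D := by
    intro y
    rw [hΨ1 y, hΨ2 y]
    simp only [F]
    set a₁ := albedo M ξ₁ y
    set a₂ := albedo M ξ₂ y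
    set I₁ := ∫ u in (0:ℝ)..1, Φ ξ₁ u
    set I₂ := ∫ u in (0:ℝ)..1, Γ ξ₂ u
    set q := Q * sTilde y
    have heq2 : Φ ξ₁ y + t * (q * (1 - a₁) - (B + C) * Φ ξ₁ y - A + C * I₁) -
        (Γ ξ₂ y + t * (q * (1 - a₂) - (B + C) * Γ ξ₂ y - A + C * I₂)) =
        (1 - t * (B + C)) * (Φ ξ₁ y - Γ ξ₂ y) + t * q * (a₂ - a₁) + t * C * (I₁ - I₂) := by
      ring
    rw [heq2]
    have b1 : |(1 - t * (B + C)) * (Φ ξ₁ y - Γ ξ₂ y)| ≤ (1 - t * (B + C)) * K := by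
      rw [abs_mul, abs_of_nonneg h1tBC]
      exact mul_le_mul_of_nonneg_left (hKd y) h1tBC
    have b2 : |t * q * (a₂ - a₁)| ≤ t * r * (L * d) := by
      rw [abs_mul, abs_mul, abs_of_pos ht0]
      have hq := hQs y
      have haa := ha y
      have h0 : 0 ≤ |q| := abs_nonneg _
      have h1 : |q| * |a₂ - a₁| ≤ r * (L * d) := by
        apply mul_le_mul hq haa (abs_nonneg _) hr0.le
      linarith [mul_le_mul_of_nonneg_left h1 ht0.le]
    have b3 : |t * C * (I₁ - I₂)| ≤ t * C * K := by
      rw [abs_mul, abs_of_nonneg (by rw [hCv]; positivity : (0:ℝ) ≤ t * C)]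
      exact mul_le_mul_of_nonneg_left hI (by rw [hCv]; positivity)
    have t1 := abs_add_le ((1 - t * (B + C)) * (Φ ξ₁ y - Γ ξ₂ y)) (t * q * (a₂ - a₁))
    have t2 := abs_add_le ((1 - t * (B + C)) * (Φ ξ₁ y - Γ ξ₂ y) + t * q * (a₂ - a₁))
      (t * C * (I₁ - I₂))
    have htri : |(1 - t * (B + C)) * (Φ ξ₁ y - Γ ξ₂ y) + t * q * (a₂ - a₁) +
        t * C * (I₁ - I₂)| ≤ |(1 - t * (B + C)) * (Φ ξ₁ y - Γ ξ₂ y)| +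
        |t * q * (a₂ - a₁)| + |t * C * (I₁ - I₂)| := by linarith
    have hfin : (1 - t * (B + C)) * K + t * r * (L * d) + t * C * K ≤ ρ * D := by
      have e1 : (1 - t * (B + C)) * K + t * r * (L * d) + t * C * K =
          (1 - t * B) * (D + L * d) + t * (L * r * d) := by rw [hK]; ring
      rw [e1, hρ]
      have c1 : (1 - t * B) * (L * d) ≤ (1 - t * B) * (t * δ₁ * D) :=
        mul_le_mul_of_nonneg_left hLd h1tB
      have c2 : t * (L * r * d) ≤ t * (t * δ₂ * D) := mul_le_mul_of_nonneg_left hLrd ht0.le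
      have c3 : t * (t * δ₂ * D) ≤ t * (δ₂ * D) := by
        have hh : 0 ≤ (1 - t) * (t * δ₂ * D) :=
          mul_nonneg (by linarith) (mul_nonneg (mul_nonneg ht0.le hδ₂0) hD0)
        linarith [hh]
      linarith [c1, c2, c3]
    linarith
  have hρD0 : 0 ≤ ρ * D := mul_nonneg hρ0 hD0
  refine le_trans ((BoundedContinuousFunction.norm_le hρD0).mpr ?_) le_rfl
  intro y
  simpa [Real.norm_eq_abs] using hpt y
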